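/- Let μ be a probability measure on the circle that is IP-Dirichlet along b, i.e. ‖χ_{b(F)} − 1‖_{L²(μ)} → 0 as min F → ∞ over finite nonempty F ⊆ ℕ. Then for every ω ∈ {0,1}^ℕ, the sequence of functions n ↦ χ_{b(K(ω)∩[1,n])} (where K(ω) = {k : ω_k = 1}) is Cauchy in L²(μ), converging uniformly in ω to a limit 𝒳(ω), and ω ↦ 𝒳(ω) is continuous from {0,1}^ℕ to L²(μ). -/

import Mathlib

open MeasureTheory Filter

/-- the character `χ_m(t) = e^{2πimt}` on `ℝ/ℤ` -/
noncomputable def char (m : ℕ) (t : AddCircle (1:ℝ)) : ℂ := (AddCircle.toCircle (m • t) : ℂ)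

/-- `b(K(ω) ∩ [1,n])`, where `K(ω) = {k : ω k = true}` -/
def bSum (b : ℕ → ℕ) (ω : ℕ → Bool) (n : ℕ) : ℕ :=
  ∑ k ∈ (Finset.Icc 1 n).filter (fun k => ω k = true), b k

set_option linter.unusedSectionVars false

section aux
variable {μ : Measure (AddCircle (1:ℝ))} [IsProbabilityMeasure μ]

lemma char_norm (m : ℕ) (t : AddCircle (1:ℝ)) : ‖char m t‖ = 1 := by
  simp [char, Circle.norm_coe]

lemma char_add (a c : ℕ) (t : AddCircle (1:ℝ)) : char (a + c) t = char a t * char c t := by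
  simp [char, add_nsmul, AddCircle.toCircle_add]

lemma char_zero' (t : AddCircle (1:ℝ)) : char 0 t = 1 := by simp [char]

lemma char_cont (m : ℕ) : Continuous (char m) :=
  continuous_subtype_val.comp (AddCircle.continuous_toCircle.comp (continuous_const_smul m))

lemma char_mem (m : ℕ) : MemLp (char m) 2 μ :=
  MemLp.of_bound (char_cont m).aestronglyMeasurable 1
    (Eventually.of_forall fun t => (char_norm m t).le)

lemma norm_sq_eq_integral (f : Lp ℂ 2 μ) : ‖f‖ ^ 2 = ∫ t, ‖f t‖ ^ 2 ∂μ := by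
  rw [← inner_self_eq_norm_sq (𝕜 := ℂ) f, MeasureTheory.L2.inner_def,
    ← integral_re (MeasureTheory.L2.integrable_inner f f)]
  exact integral_congr_ae (Eventually.of_forall fun t => inner_self_eq_norm_sq (𝕜 := ℂ) (f t))

lemma L2diff (f g : Lp ℂ 2 μ) : ∫ t, ‖f t - g t‖ ^ 2 ∂μ = ‖f - g‖ ^ 2 := by
  rw [norm_sq_eq_integral]
  refine integral_congr_ae ?_
  filter_upwards [Lp.coeFn_sub f g] with t h
  rw [h, Pi.sub_apply]

lemma L2diff' {f g : AddCircle (1:ℝ) → ℂ} (hf : MemLp f 2 μ) (hg : MemLp g 2 μ) :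
    ∫ t, ‖f t - g t‖ ^ 2 ∂μ = ‖hf.toLp f - hg.toLp g‖ ^ 2 := by
  rw [← L2diff]
  refine integral_congr_ae ?_
  filter_upwards [hf.coeFn_toLp, hg.coeFn_toLp] with t h1 h2
  rw [h1, h2]

lemma L2diff'' {f : AddCircle (1:ℝ) → ℂ} (hf : MemLp f 2 μ) (g : Lp ℂ 2 μ) :
    ∫ t, ‖f t - g t‖ ^ 2 ∂μ = ‖hf.toLp f - g‖ ^ 2 := by
  rw [← L2diff]
  refine integral_congr_ae ?_
  filter_upwards [hf.coeFn_toLp] with t h1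
  rw [h1]

end aux

/-- If the probability measure `μ` on the circle is IP-Dirichlet along `b`
(`‖χ_{b(F)} − 1‖_{L²(μ)} → 0` as `min F → ∞`), then for every `ω ∈ {0,1}^ℕ` the
sequence `n ↦ χ_{b(K(ω)∩[1,n])}` is Cauchy in `L²(μ)`, converging uniformly in `ω`
to a limit `𝒳(ω)`, and `ω ↦ 𝒳(ω)` is continuous into `L²(μ)`. -/
theorem stmt14 (b : ℕ → ℕ) (hb : StrictMono b) (hbpos : ∀ n, 0 < b n)
    (μ : Measure (AddCircle (1:ℝ))) [IsProbabilityMeasure μ]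
    (hIP : ∀ ε > 0, ∃ K : ℕ, ∀ F : Finset ℕ, ∀ hF : F.Nonempty, K ≤ F.min' hF →
      (∫ t, ‖char (∑ j ∈ F, b j) t - 1‖ ^ 2 ∂μ) < ε) :
    ∃ 𝒳 : (ℕ → Bool) → AddCircle (1:ℝ) → ℂ,
      -- Cauchy in `L²(μ)`, uniformly in `ω`:
      (∀ ε > 0, ∃ N : ℕ, ∀ ω : ℕ → Bool, ∀ m n, N ≤ m → N ≤ n →
        (∫ t, ‖char (bSum b ω n) t - char (bSum b ω m) t‖ ^ 2 ∂μ) < ε) ∧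
      -- uniform (in `ω`) convergence to `𝒳(ω)` in `L²(μ)`:
      (∀ ε > 0, ∃ N : ℕ, ∀ ω : ℕ → Bool, ∀ n, N ≤ n →
        (∫ t, ‖char (bSum b ω n) t - 𝒳 ω t‖ ^ 2 ∂μ) < ε) ∧
      -- continuity of `ω ↦ 𝒳(ω)` from `{0,1}^ℕ` into `L²(μ)`:
      (∀ ω : ℕ → Bool,
        Tendsto (fun ω' : ℕ → Bool => ∫ t, ‖𝒳 ω' t - 𝒳 ω t‖ ^ 2 ∂μ) (nhds ω) (nhds 0)) := by
  classical
  -- the Lp elements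
  set F : (ℕ → Bool) → ℕ → Lp ℂ 2 μ :=
    fun ω n => (char_mem (μ := μ) (bSum b ω n)).toLp (char (bSum b ω n)) with hFdef
  have hdist : ∀ (ω : ℕ → Bool) (m n : ℕ),
      ∫ t, ‖char (bSum b ω n) t - char (bSum b ω m) t‖ ^ 2 ∂μ = ‖F ω n - F ω m‖ ^ 2 :=
    fun ω m n => L2diff' (char_mem _) (char_mem _)
  -- the key Cauchy estimate
  have key : ∀ ε > 0, ∃ N : ℕ, ∀ ω : ℕ → Bool, ∀ m n, N ≤ m → N ≤ n →
      (∫ t, ‖char (bSum b ω n) t - char (bSum b ω m) t‖ ^ 2 ∂μ) < ε := by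
    intro ε hε
    obtain ⟨K, hK⟩ := hIP ε hε
    refine ⟨K, ?_⟩
    have main : ∀ (ω : ℕ → Bool) (m n : ℕ), K ≤ m → m ≤ n →
        (∫ t, ‖char (bSum b ω n) t - char (bSum b ω m) t‖ ^ 2 ∂μ) < ε := by
      intro ω m n hm hmn
      set Fs : Finset ℕ := (Finset.Icc (m+1) n).filter (fun k => ω k = true) with hFs
      have hsplit : bSum b ω n = bSum b ω m + ∑ j ∈ Fs, b j := by
        unfold bSum
        rw [← Finset.sum_union]
        · congr 1
          ext k
          simp only [Finset.mem_filter, Finset.mem_union, Finset.mem_Icc, hFs]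
          by_cases hP : ω k = true <;> simp [hP] <;> omega
        · rw [Finset.disjoint_left]
          intro a ha hb'
          simp only [Finset.mem_filter, Finset.mem_Icc, hFs] at ha hb'
          omega
      have hpt : ∀ t, ‖char (bSum b ω n) t - char (bSum b ω m) t‖ ^ 2
          = ‖char (∑ j ∈ Fs, b j) t - 1‖ ^ 2 := by
        intro t
        rw [hsplit, char_add, ← mul_one (char (bSum b ω m) t), mul_assoc, ← mul_sub,
          norm_mul, one_mul, char_norm, one_mul]
      rw [integral_congr_ae (Eventually.of_forall fun t => hpt t)]
      by_cases hne : Fs.Nonempty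
      · refine hK Fs hne ?_
        have h5 : Fs.min' hne ∈ Finset.Icc (m+1) n :=
          Finset.filter_subset _ _ (Fs.min'_mem hne)
        rw [Finset.mem_Icc] at h5
        omega
      · rw [Finset.not_nonempty_iff_eq_empty] at hne
        simp only [hne, Finset.sum_empty]
        have : ∀ t : AddCircle (1:ℝ), ‖char 0 t - 1‖ ^ 2 = 0 := by
          intro t; rw [char_zero', sub_self, norm_zero]; ring
        rw [integral_congr_ae (Eventually.of_forall this), integral_zero]
        exact hε
    intro ω m n hm hn
    rcases le_total m n with h | h
    · exact main ω m n hm h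
    · have h2 := main ω n m hn h
      have : ∀ t, ‖char (bSum b ω n) t - char (bSum b ω m) t‖ ^ 2
          = ‖char (bSum b ω m) t - char (bSum b ω n) t‖ ^ 2 := by
        intro t; rw [norm_sub_rev]
      rw [integral_congr_ae (Eventually.of_forall this)]
      exact h2
  -- Cauchy sequences, limits
  have hcauchy : ∀ ω, CauchySeq (F ω) := by
    intro ω
    rw [Metric.cauchySeq_iff]
    intro ε hε
    obtain ⟨N, hN⟩ := key (ε ^ 2) (by positivity)
    refine ⟨N, fun m hm n hn => ?_⟩
    have h1 := hN ω n m hn hm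
    rw [hdist ω n m] at h1
    rw [dist_eq_norm]
    nlinarith [norm_nonneg (F ω m - F ω n)]
  have hlim : ∀ ω, ∃ g : Lp ℂ 2 μ, Tendsto (F ω) atTop (nhds g) :=
    fun ω => cauchySeq_tendsto_of_complete (hcauchy ω)
  choose G hG using hlim
  -- uniform convergence in Lp norm
  have hGnorm : ∀ ε > 0, ∃ N : ℕ, ∀ ω n, N ≤ n → ‖F ω n - G ω‖ < ε := by
    intro ε hε
    obtain ⟨N, hN⟩ := key (ε ^ 2 / 2) (by positivity)
    refine ⟨N, fun ω n hn => ?_⟩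
    have htend : Tendsto (fun m => ‖F ω n - F ω m‖) atTop (nhds ‖F ω n - G ω‖) :=
      (tendsto_const_nhds.sub (hG ω)).norm
    have hle : ‖F ω n - G ω‖ ^ 2 ≤ ε ^ 2 / 2 := by
      refine le_of_tendsto (htend.pow 2) ?_
      filter_upwards [eventually_ge_atTop N] with m hm
      have h1 := hN ω m n hm hn
      rw [hdist ω m n] at h1
      exact h1.le
    nlinarith [norm_nonneg (F ω n - G ω)]
  refine ⟨fun ω => ⇑(G ω), key, ?_, ?_⟩
  · -- uniform convergence property
    intro ε hε
    obtain ⟨N, hN⟩ := hGnorm (Real.sqrt ε) (Real.sqrt_pos.2 hε)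
    refine ⟨N, fun ω n hn => ?_⟩
    rw [L2diff'' (char_mem _) (G ω)]
    have h1 := hN ω n hn
    have h2 := Real.sq_sqrt hε.le
    have h3 := norm_nonneg ((char_mem (μ := μ) (bSum b ω n)).toLp _ - G ω)
    have h4 : (char_mem (μ := μ) (bSum b ω n)).toLp (char (bSum b ω n)) = F ω n := rfl
    rw [h4]
    nlinarith [norm_nonneg (F ω n - G ω)]
  · -- continuity
    intro ω
    rw [Metric.tendsto_nhds]
    intro ε hε
    obtain ⟨N, hN⟩ := hGnorm (Real.sqrt ε / 3) (by positivity)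
    have hev : ∀ᶠ ω' in nhds ω, ∀ k ∈ Finset.Icc 1 N, ω' k = ω k := by
      rw [eventually_all_finset]
      intro k _
      have hmem : {x : Bool | x = ω k} ∈ nhds (ω k) := by
        rw [mem_nhds_discrete]; rfl
      exact ((continuous_apply k).tendsto ω).eventually (eventually_of_mem hmem fun y hy => hy)
    filter_upwards [hev] with ω' hω'
    have hbe : bSum b ω' N = bSum b ω N := by
      unfold bSum
      congr 1
      exact Finset.filter_congr fun k hk => by rw [hω' k hk]
    have hFeq : F ω' N = F ω N :=
      congrArg (fun m : ℕ => (char_mem (μ := μ) m).toLp (char m)) hbe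
    have htri : ‖G ω' - G ω‖ < 2 * (Real.sqrt ε / 3) := by
      have h1 := hN ω' N le_rfl
      have h2 := hN ω N le_rfl
      calc ‖G ω' - G ω‖ = ‖-(F ω' N - G ω') + (F ω N - G ω) + (F ω' N - F ω N)‖ := by
            congr 1; abel
        _ ≤ ‖-(F ω' N - G ω') + (F ω N - G ω)‖ + ‖F ω' N - F ω N‖ := norm_add_le _ _
        _ ≤ ‖-(F ω' N - G ω')‖ + ‖F ω N - G ω‖ + ‖F ω' N - F ω N‖ :=
            add_le_add_left (norm_add_le _ _) _
        _ = ‖F ω' N - G ω'‖ + ‖F ω N - G ω‖ + 0 := by rw [norm_neg, hFeq, sub_self, norm_zero]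
        _ < Real.sqrt ε / 3 + Real.sqrt ε / 3 + 0 := by
            exact add_lt_add_left (add_lt_add h1 h2) 0
        _ = 2 * (Real.sqrt ε / 3) := by ring
    have hval : ∫ t, ‖(G ω') t - (G ω) t‖ ^ 2 ∂μ = ‖G ω' - G ω‖ ^ 2 := L2diff (G ω') (G ω)
    have hnonneg : 0 ≤ ∫ t, ‖(G ω') t - (G ω) t‖ ^ 2 ∂μ :=
      integral_nonneg fun t => by positivity
    rw [Real.dist_eq, sub_zero, abs_of_nonneg hnonneg, hval]
    have h2 := Real.sq_sqrt hε.le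
    nlinarith [norm_nonneg (G ω' - G ω), Real.sqrt_nonneg ε]
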